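/- arXiv:1609.00427 — 4 statements merged into one kernel-verified Lean document; each statement's English description precedes it below -/
import Mathlib

section
/- Let B > 0 and α ∈ (0,1], and let f* ≥ 0. Suppose g₀ = 0 and a sequence g₀ ≤ g₁ ≤ ... ≤ g_B of nonnegative reals satisfies α·((f* - g_i/α) - (f* - g_{i+1}/α)) ≥ (1/B)·(f* - g_i/α) for all 0 ≤ i < B, with 1/(αB) ≤ 1. Then g_B ≥ α·(1 - e^{-1/α})·f*. -/
theorem stmt_1 (B : ℕ) (hB : 0 < B) (α : ℝ) (hα0 : 0 < α) (hα1 : α ≤ 1)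
    (fstar : ℝ) (hf : 0 ≤ fstar) (g : ℕ → ℝ)
    (hg0 : g 0 = 0) (hnn : ∀ i ≤ B, 0 ≤ g i)
    (hmono : ∀ i, i < B → g i ≤ g (i + 1))
    (hrec : ∀ i < B, α * ((fstar - g i / α) - (fstar - g (i + 1) / α))
      ≥ (1 / B) * (fstar - g i / α))
    (hx : 1 / (α * B) ≤ 1) :
    g B ≥ α * (1 - Real.exp (-1 / α)) * fstar := by
  have hBpos : (0:ℝ) < B := Nat.cast_pos.mpr hB
  set x : ℝ := 1/(α*B) with hxdef
  have hxpos : 0 < x := by rw [hxdef]; positivity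
  have hax : α * x = 1 / B := by rw [hxdef]; field_simp
  have key : ∀ i ≤ B, fstar - g i / α ≤ (1-x)^i * fstar := by
    intro i hi
    induction i with
    | zero => simp [hg0]
    | succ n ih =>
      have hn : n < B := hi
      have ih' := ih (le_of_lt hn)
      have h := hrec n hn
      have h1x : 0 ≤ 1 - x := by linarith
      have hax' : α*x*(fstar - g n/α) = (1/B)*(fstar - g n/α) := by rw [hax]
      have step2 : α * (fstar - g (n+1)/α) ≤ α * ((1-x) * (fstar - g n / α)) := by
        nlinarith [h, hax']
      have step : fstar - g (n+1)/α ≤ (1-x) * (fstar - g n / α) :=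
        (mul_le_mul_iff_right₀ hα0).mp step2
      calc fstar - g (n+1)/α ≤ (1-x) * (fstar - g n/α) := step
        _ ≤ (1-x) * ((1-x)^n * fstar) := by nlinarith [ih']
        _ = (1-x)^(n+1) * fstar := by ring
  have hB' := key B le_rfl
  have hexp : (1-x)^B ≤ Real.exp (-1/α) := by
    have h1 : (1-x) ≤ Real.exp (-x) := by
      have := Real.add_one_le_exp (-x); linarith
    have h2 : (0:ℝ) ≤ 1 - x := by linarith
    calc (1-x)^B ≤ (Real.exp (-x))^B := pow_le_pow_left₀ h2 h1 B
      _ = Real.exp ((B:ℝ) * (-x)) := by rw [Real.exp_nat_mul]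
      _ = Real.exp (-1/α) := by
          congr 1
          rw [hxdef]; field_simp
  have hfin : fstar - g B / α ≤ Real.exp (-1/α) * fstar :=
    le_trans hB' (mul_le_mul_of_nonneg_right hexp hf)
  have hc : α * (g B / α) = g B := by field_simp
  nlinarith [mul_le_mul_of_nonneg_left hfin hα0.le, hc]
end

section
/- Let B > 0, α ∈ (0,1], f* ≥ 0, and let c₁, ..., c_l be positive reals with Σ_{i=1}^l c_i ≥ B - C̄ for some C̄ ∈ [0, B], and c_i/(αB) ≤ 1 for all i. Suppose g₀ = 0 and g₀ ≤ g₁ ≤ ... ≤ g_l satisfy α·((f* - g_{i-1}/α) - (f* - g_i/α)) ≥ (c_i/B)·(f* - g_{i-1}/α) for all 1 ≤ i ≤ l. Then g_l ≥ α·(1 - e^{-(1/α)·(B - C̄)/B})·f*. -/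
theorem stmt_6 (l : ℕ) (B : ℝ) (hB : 0 < B) (α : ℝ) (hα0 : 0 < α) (hα1 : α ≤ 1)
    (fstar : ℝ) (hf : 0 ≤ fstar)
    (c : ℕ → ℝ) (hc : ∀ i, 1 ≤ i → i ≤ l → 0 < c i)
    (Cbar : ℝ) (hC0 : 0 ≤ Cbar) (hCB : Cbar ≤ B)
    (hsum : (∑ i ∈ Finset.Icc 1 l, c i) ≥ B - Cbar)
    (hx : ∀ i, 1 ≤ i → i ≤ l → c i / (α * B) ≤ 1)
    (g : ℕ → ℝ) (hg0 : g 0 = 0) (hnn : ∀ i ≤ l, 0 ≤ g i)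
    (hmono : ∀ i, i < l → g i ≤ g (i + 1))
    (hrec : ∀ i, 1 ≤ i → i ≤ l →
      α * ((fstar - g (i - 1) / α) - (fstar - g i / α)) ≥ (c i / B) * (fstar - g (i - 1) / α)) :
    g l ≥ α * (1 - Real.exp (-(1 / α) * ((B - Cbar) / B))) * fstar := by
  have hαB : 0 < α * B := mul_pos hα0 hB
  -- key induction: f* - g i / α ≤ f* * ∏_{j=1}^i (1 - c j / (αB))
  have key : ∀ i, i ≤ l →
      fstar - g i / α ≤ fstar * ∏ j ∈ Finset.Icc 1 i, (1 - c j / (α * B)) := by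
    intro i
    induction i with
    | zero => intro _; simp [hg0]
    | succ n ih =>
      intro hle
      have hn : n ≤ l := Nat.le_of_succ_le hle
      have ihn := ih hn
      have hrec' := hrec (n+1) (Nat.le_add_left 1 n) hle
      simp only [Nat.add_sub_cancel] at hrec'
      -- derive h_{n+1} ≤ (1 - x) h_n
      have hstep : fstar - g (n+1) / α ≤
          (fstar - g n / α) * (1 - c (n+1) / (α * B)) := by
        have hB' : B ≠ 0 := ne_of_gt hB
        have hα' : α ≠ 0 := ne_of_gt hα0
        have : α * (fstar - g (n+1) / α) ≤
            (fstar - g n / α) * (α - c (n+1) / B) := by nlinarith [hrec']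
        rw [← mul_le_mul_iff_of_pos_right hα0]
        calc (fstar - g (n+1) / α) * α = α * (fstar - g (n+1) / α) := by ring
          _ ≤ (fstar - g n / α) * (α - c (n+1) / B) := this
          _ = (fstar - g n / α) * (1 - c (n+1) / (α * B)) * α := by
              field_simp
      have hxn : c (n+1) / (α * B) ≤ 1 := hx (n+1) (Nat.le_add_left 1 n) hle
      have hfac : 0 ≤ 1 - c (n+1) / (α * B) := by linarith
      have hprod : (fstar - g n / α) * (1 - c (n+1) / (α * B)) ≤
          (fstar * ∏ j ∈ Finset.Icc 1 n, (1 - c j / (α * B))) * (1 - c (n+1) / (α * B)) :=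
        mul_le_mul_of_nonneg_right ihn hfac
      calc fstar - g (n+1) / α ≤ _ := hstep
        _ ≤ _ := hprod
        _ = fstar * ∏ j ∈ Finset.Icc 1 (n+1), (1 - c j / (α * B)) := by
            rw [Finset.prod_Icc_succ_top (Nat.le_add_left 1 n)]; ring
  have hkey := key l le_rfl
  have hprodexp : (∏ j ∈ Finset.Icc 1 l, (1 - c j / (α * B))) ≤
      Real.exp (-((∑ j ∈ Finset.Icc 1 l, c j) / (α * B))) := by
    have h1 : (∏ j ∈ Finset.Icc 1 l, (1 - c j / (α * B))) ≤
        ∏ j ∈ Finset.Icc 1 l, Real.exp (-(c j / (α * B))) := by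
      apply Finset.prod_le_prod
      · intro j hj
        simp only [Finset.mem_Icc] at hj
        have := hx j hj.1 hj.2
        linarith
      · intro j hj
        have := Real.add_one_le_exp (-(c j / (α * B)))
        linarith
    calc _ ≤ _ := h1
      _ = Real.exp (∑ j ∈ Finset.Icc 1 l, -(c j / (α * B))) := (Real.exp_sum _ _).symm
      _ = Real.exp (-((∑ j ∈ Finset.Icc 1 l, c j) / (α * B))) := by
          congr 1
          rw [Finset.sum_div, ← Finset.sum_neg_distrib]
  have hmonoexp : Real.exp (-((∑ j ∈ Finset.Icc 1 l, c j) / (α * B))) ≤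
      Real.exp (-(1 / α) * ((B - Cbar) / B)) := by
    apply Real.exp_le_exp.mpr
    have h2 : (B - Cbar) / (α * B) ≤ (∑ j ∈ Finset.Icc 1 l, c j) / (α * B) :=
      div_le_div_of_nonneg_right hsum hαB.le |>.trans_eq rfl
    have : -(1 / α) * ((B - Cbar) / B) = -((B - Cbar) / (α * B)) := by
      field_simp
    rw [this]
    linarith
  have hE : 0 ≤ Real.exp (-(1 / α) * ((B - Cbar) / B)) := (Real.exp_pos _).le
  have hfinal : fstar - g l / α ≤ fstar * Real.exp (-(1 / α) * ((B - Cbar) / B)) := by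
    calc fstar - g l / α ≤ _ := hkey
      _ ≤ _ := mul_le_mul_of_nonneg_left (hprodexp.trans hmonoexp) hf
  have hgl : g l / α = g l * (1/α) := by ring
  nlinarith [mul_le_mul_of_nonneg_left hfinal (le_of_lt hα0), mul_div_cancel₀ (g l) (ne_of_gt hα0)]
end

section
/- Let ε ∈ [0,1), α ∈ (0,1], and n ≥ 0. Let Δ : V → ℝ be a nonnegative function on a finite nonempty set V, and let f̃, f : V → ℝ satisfy (1-ε)·(F + Δ(u)) ≤ F̃ + Δ̃(u) ≤ (1+ε)·(F + Δ(u)) for all u ∈ V, where F ≤ n, F̃ are fixed reals and Δ̃ : V → ℝ. If v maximizes Δ̃ over V and u* maximizes Δ over V, then Δ(v) ≥ ((1-ε)/(1+ε))·Δ(u*) - (2ε/(1+ε))·n. -/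
theorem stmt_8 {ι : Type*} (V : Finset ι) (hV : V.Nonempty)
    (ε : ℝ) (hε0 : 0 ≤ ε) (hε1 : ε < 1) (α : ℝ) (hα0 : 0 < α) (hα1 : α ≤ 1)
    (n : ℝ) (hn : 0 ≤ n) (F Ftil : ℝ) (hF : F ≤ n)
    (Δ Δtil : ι → ℝ) (hΔnn : ∀ u ∈ V, 0 ≤ Δ u)
    (happrox : ∀ u ∈ V, (1 - ε) * (F + Δ u) ≤ Ftil + Δtil u ∧
      Ftil + Δtil u ≤ (1 + ε) * (F + Δ u))
    (v : ι) (hv : v ∈ V) (hvmax : ∀ u ∈ V, Δtil u ≤ Δtil v)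
    (ustar : ι) (hustar : ustar ∈ V) (hustarmax : ∀ u ∈ V, Δ u ≤ Δ ustar) :
    Δ v ≥ ((1 - ε) / (1 + ε)) * Δ ustar - (2 * ε / (1 + ε)) * n := by
  have h1 := (happrox v hv).2
  have h2 := (happrox ustar hustar).1
  have h3 := hvmax ustar hustar
  have hpos : (0:ℝ) < 1 + ε := by linarith
  rw [ge_iff_le, div_mul_eq_mul_div, div_mul_eq_mul_div, ← sub_div, div_le_iff₀ hpos]
  nlinarith [hΔnn ustar hustar]
end

section
/- Let B be a positive integer, α ∈ (0,1], ε ∈ [0,1), n ≥ 0, and f* ≥ 0. Suppose g₀ = 0 and g₀ ≤ g₁ ≤ ... ≤ g_B satisfy (α/(1+ε))·((f* - (1+ε)g_i/α) - (f* - (1+ε)g_{i+1}/α)) ≥ ((1-ε)/((1+ε)B))·(f* - (1+ε)g_i/α) - (2ε/(1+ε))·n for all 0 ≤ i < B, with (1-ε)/(αB) ≤ 1. Then g_B ≥ (α/(1+ε))·(1 - e^{-(1-ε)/α})·f* - (2ε/(1+ε))·n·B. -/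
theorem stmt_10 (B : ℕ) (hB : 0 < B) (α : ℝ) (hα0 : 0 < α) (hα1 : α ≤ 1)
    (ε : ℝ) (hε0 : 0 ≤ ε) (hε1 : ε < 1) (n fstar : ℝ) (hn : 0 ≤ n) (hf : 0 ≤ fstar)
    (g : ℕ → ℝ) (hg0 : g 0 = 0) (hnn : ∀ i ≤ B, 0 ≤ g i)
    (hmono : ∀ i, i < B → g i ≤ g (i + 1))
    (hrec : ∀ i < B,
      (α / (1 + ε)) * ((fstar - (1 + ε) * g i / α) - (fstar - (1 + ε) * g (i + 1) / α))
        ≥ ((1 - ε) / ((1 + ε) * B)) * (fstar - (1 + ε) * g i / α) - (2 * ε / (1 + ε)) * n)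
    (hx : (1 - ε) / (α * B) ≤ 1) :
    g B ≥ (α / (1 + ε)) * (1 - Real.exp (-(1 - ε) / α)) * fstar - (2 * ε / (1 + ε)) * n * B := by
  have h1ε : (0:ℝ) < 1 + ε := by linarith
  have hBpos : (0:ℝ) < (B:ℝ) := Nat.cast_pos.mpr hB
  set d : ℕ → ℝ := fun i => fstar - (1 + ε) * g i / α with hd
  set c : ℝ := (1 - ε) / (α * B) with hc
  have hc0 : 0 ≤ c := div_nonneg (by linarith) (by positivity)
  have hc1 : c ≤ 1 := hx
  have hαB : (0:ℝ) < α * B := by positivity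
  have key : ∀ i < B, d (i+1) ≤ (1 - c) * d i + (2*ε/α)*n := by
    intro i hi
    have h := hrec i hi
    rw [ge_iff_le] at h
    have h2 := mul_le_mul_of_nonneg_left h h1ε.le
    have h3 : (1-ε)/(B:ℝ) * d i - 2*ε*n ≤ α * (d i - d (i+1)) := by
      have e1 : (1+ε) * ((α / (1 + ε)) * (d i - d (i+1))) = α * (d i - d (i+1)) := by
        field_simp
      have e2 : (1+ε) * (((1 - ε) / ((1 + ε) * B)) * d i - (2 * ε / (1 + ε)) * n)
          = (1-ε)/(B:ℝ) * d i - 2*ε*n := by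
        field_simp
      calc (1-ε)/(B:ℝ) * d i - 2*ε*n = (1+ε) * (((1 - ε) / ((1 + ε) * B)) * d i - (2 * ε / (1 + ε)) * n) := e2.symm
        _ ≤ (1+ε) * ((α / (1 + ε)) * (d i - d (i+1))) := h2
        _ = α * (d i - d (i+1)) := e1
    rw [← sub_nonneg]
    have expand : (1 - c) * d i + (2*ε/α)*n - d (i+1)
        = (α * (d i - d (i+1)) - ((1-ε)/(B:ℝ) * d i - 2*ε*n)) / α := by
      rw [hc]; field_simp; ring
    rw [expand]
    exact div_nonneg (by linarith) hα0.le
  have main : ∀ i, i ≤ B → d i ≤ (1-c)^i * fstar + i * ((2*ε/α)*n) := by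
    intro i
    induction i with
    | zero => intro _; simp [hd, hg0]
    | succ k ih =>
      intro hk
      have hk' : k < B := hk
      have h1 := ih hk'.le
      have h2 := key k hk'
      have h1c0 : 0 ≤ 1 - c := by linarith
      have hterm : 0 ≤ (2*ε/α)*n := by positivity
      have : (1-c) * d k ≤ (1-c) * ((1-c)^k * fstar + k * ((2*ε/α)*n)) :=
        mul_le_mul_of_nonneg_left h1 h1c0
      have h3 : (1-c) * ((1-c)^k * fstar + k * ((2*ε/α)*n)) ≤ (1-c)^(k+1) * fstar + k * ((2*ε/α)*n) := by
        have : (1-c) * ((k:ℝ) * ((2*ε/α)*n)) ≤ (k:ℝ) * ((2*ε/α)*n) := by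
          nlinarith [mul_nonneg (Nat.cast_nonneg k : (0:ℝ) ≤ k) hterm]
        rw [pow_succ]; nlinarith
      push_cast
      linarith
  have hdB := main B le_rfl
  have hexp : (1-c)^B ≤ Real.exp (-(1 - ε) / α) := by
    have h1 : 1 - c ≤ Real.exp (-c) := by
      have := Real.add_one_le_exp (-c); linarith
    have h2 : (1-c)^B ≤ (Real.exp (-c))^B :=
      pow_le_pow_left₀ (by linarith) h1 B
    have h3 : (Real.exp (-c))^B = Real.exp (-(1-ε)/α) := by
      rw [← Real.exp_nat_mul]
      congr 1
      rw [hc]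
      field_simp
    linarith [h2, h3.le, h3.ge]
  have hdB2 : d B ≤ Real.exp (-(1 - ε) / α) * fstar + (B:ℝ) * ((2*ε/α)*n) := by
    have := mul_le_mul_of_nonneg_right hexp hf
    linarith
  -- conclude
  rw [ge_iff_le, ← sub_nonneg]
  have expand2 : g B - ((α / (1 + ε)) * (1 - Real.exp (-(1 - ε) / α)) * fstar - (2 * ε / (1 + ε)) * n * B)
      = (α/(1+ε)) * ((Real.exp (-(1 - ε) / α) * fstar + (B:ℝ) * ((2*ε/α)*n)) - d B) := by
    rw [hd]; field_simp; ring
  rw [expand2]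
  exact mul_nonneg (by positivity) (by linarith)
end
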